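/- For every λ ∈ (0,1), ∫_{λe^{1−λ}}^{1} (−λ / W(−λe^{1−λ−z})) dz = 1 − e^{λ−1} − λ(1−λ). -/

import Mathlib

open Filter Topology

theorem stmt_10 (W : ℝ → ℝ)
    (hW : ∀ z : ℝ, -(Real.exp 1)⁻¹ ≤ z → -1 ≤ W z ∧ W z * Real.exp (W z) = z)
    (hW' : ∀ y : ℝ, -1 ≤ y → W (y * Real.exp y) = y)
    (l : ℝ) (hl : l ∈ Set.Ioo (0 : ℝ) 1) :
    ∫ z in (l * Real.exp (1 - l))..(1 : ℝ), (-l / W (-(l * Real.exp (1 - l - z)))) =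
      1 - Real.exp (l - 1) - l * (1 - l) := by
  obtain ⟨hl0, hl1⟩ := hl
  set u := l * Real.exp (1 - l) with hu_def
  have hu0 : 0 < u := by positivity
  have huexp : u = Real.exp (Real.log l + (1 - l)) := by
    rw [Real.exp_add, Real.exp_log hl0]
  have hloglt : Real.log l < l - 1 := Real.log_lt_sub_one_of_pos hl0 (ne_of_lt hl1)
  have hu1 : u < 1 := by
    calc u = Real.exp (Real.log l + (1 - l)) := huexp
      _ < Real.exp 0 := Real.exp_lt_exp.2 (by linarith)
      _ = 1 := Real.exp_zero
  have hlogu : Real.log u = Real.log l + (1 - l) := by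
    rw [huexp, Real.log_exp]
  -- strict monotonicity of E y = y * exp y on Ici (-1)
  have hE : StrictMonoOn (fun y : ℝ => y * Real.exp y) (Set.Ici (-1 : ℝ)) := by
    apply strictMonoOn_of_deriv_pos (convex_Ici _)
    · fun_prop
    · intro x hx
      rw [interior_Ici] at hx
      have hd : HasDerivAt (fun y : ℝ => y * Real.exp y) (1 * Real.exp x + x * Real.exp x) x :=
        (hasDerivAt_id x).mul (Real.hasDerivAt_exp x)
      rw [hd.deriv]
      have : (-1 : ℝ) < x := hx
      nlinarith [Real.exp_pos x]
  set c := 2 - l + Real.log l with hc_def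
  have hcu : c < u := by
    have := Real.log_lt_sub_one_of_pos hu0 (ne_of_lt hu1)
    rw [hlogu] at this
    linarith
  -- the argument of W lies in Ioo (-(exp 1)⁻¹) 0 for z > c
  have hxIoo : ∀ z : ℝ, c < z →
      -(l * Real.exp (1 - l - z)) ∈ Set.Ioo (-(Real.exp 1)⁻¹) (0 : ℝ) := by
    intro z hz
    constructor
    · have h1 : l * Real.exp (1 - l - z) = Real.exp (Real.log l + (1 - l - z)) := by
        rw [Real.exp_add, Real.exp_log hl0]
      have h2 : (Real.exp 1)⁻¹ = Real.exp (-1) := (Real.exp_neg 1).symm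
      rw [h1, h2, neg_lt_neg_iff]
      exact Real.exp_lt_exp.2 (by simp only [hc_def] at hz; linarith)
    · have : 0 < l * Real.exp (1 - l - z) := by positivity
      linarith
  -- basic facts about W on Ioo (-(exp 1)⁻¹) 0
  have hWIoo : ∀ s ∈ Set.Ioo (-(Real.exp 1)⁻¹) (0 : ℝ),
      W s ∈ Set.Ioo (-1 : ℝ) 0 ∧ W s * Real.exp (W s) = s := by
    intro s hs
    obtain ⟨h1, h2⟩ := hW s hs.1.le
    have hne1 : W s ≠ -1 := by
      intro h
      rw [h] at h2
      rw [Real.exp_neg 1] at h2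
      simp at h2
      have := hs.1
      rw [← h2] at this
      exact lt_irrefl _ this
    have hlt0 : W s < 0 := by
      by_contra h
      push_neg at h
      have : (0:ℝ) ≤ W s * Real.exp (W s) := mul_nonneg h (Real.exp_pos _).le
      rw [h2] at this
      linarith [hs.2]
    exact ⟨⟨lt_of_le_of_ne h1 (Ne.symm hne1), hlt0⟩, h2⟩
  -- continuity of W on Ioo (-(exp 1)⁻¹) 0
  have hWcont : ∀ s ∈ Set.Ioo (-(Real.exp 1)⁻¹) (0 : ℝ), ContinuousAt W s := by
    intro s hs
    obtain ⟨hWm, hWE⟩ := hWIoo s hs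
    rw [ContinuousAt, tendsto_order]
    constructor
    · intro b hb
      by_cases hb1 : b < -1
      · filter_upwards [eventually_gt_nhds hs.1] with t ht
        exact lt_of_lt_of_le hb1 (hW t ht.le).1
      · push_neg at hb1
        have hEb : b * Real.exp b < s := by
          have := hE hb1 (Set.mem_Ici.2 hWm.1.le) hb
          calc b * Real.exp b < W s * Real.exp (W s) := this
            _ = s := hWE
        filter_upwards [eventually_gt_nhds hEb, eventually_gt_nhds hs.1] with t h1 h2
        obtain ⟨hm, hEq⟩ := hW t h2.le
        by_contra hcon
        push_neg at hcon
        have := hE.le_iff_le (Set.mem_Ici.2 hm) (Set.mem_Ici.2 hb1)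
        have h3 : W t * Real.exp (W t) ≤ b * Real.exp b := this.2 hcon
        rw [hEq] at h3
        linarith
    · intro b hb
      by_cases hb0 : 0 ≤ b
      · filter_upwards [eventually_gt_nhds hs.1, eventually_lt_nhds hs.2] with t h1 h2
        exact lt_of_lt_of_le (hWIoo t ⟨h1, h2⟩).1.2 hb0
      · push_neg at hb0
        have hbm : -1 ≤ b := by linarith [hWm.1, hb]
        have hEb : s < b * Real.exp b := by
          have := hE (Set.mem_Ici.2 hWm.1.le) (Set.mem_Ici.2 hbm) hb
          calc s = W s * Real.exp (W s) := hWE.symm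
            _ < b * Real.exp b := this
        filter_upwards [eventually_lt_nhds hEb, eventually_gt_nhds hs.1] with t h1 h2
        obtain ⟨hm, hEq⟩ := hW t h2.le
        by_contra hcon
        push_neg at hcon
        have := hE.le_iff_le (Set.mem_Ici.2 hbm) (Set.mem_Ici.2 hm)
        have h3 : b * Real.exp b ≤ W t * Real.exp (W t) := this.2 hcon
        rw [hEq] at h3
        linarith
  -- derivative of the antiderivative
  have key : ∀ z₀ ∈ Set.Icc u 1,
      HasDerivAt (fun z => l * (Real.log (-(W (-(l * Real.exp (1 - l - z))))) -
          (W (-(l * Real.exp (1 - l - z))))⁻¹))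
        (-l / W (-(l * Real.exp (1 - l - z₀)))) z₀ := by
    intro z₀ hz₀
    have hz₀c : c < z₀ := lt_of_lt_of_le hcu hz₀.1
    have hx₀ := hxIoo z₀ hz₀c
    obtain ⟨hy₀mem, hy₀E⟩ := hWIoo _ hx₀
    set y₀ := W (-(l * Real.exp (1 - l - z₀))) with hy₀def
    have hy₀0 : y₀ ≠ 0 := ne_of_lt hy₀mem.2
    have hy₀1 : (1 : ℝ) + y₀ ≠ 0 := by have := hy₀mem.1; intro h; linarith
    have hxcont : ContinuousAt (fun z : ℝ => -(l * Real.exp (1 - l - z))) z₀ := by fun_prop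
    have hwcont : ContinuousAt (fun z => W (-(l * Real.exp (1 - l - z)))) z₀ :=
      ContinuousAt.comp (g := W) (f := fun z : ℝ => -(l * Real.exp (1 - l - z)))
        (hWcont _ hx₀) hxcont
    -- the local inverse function
    have hfinv : HasDerivAt (fun y : ℝ => 1 - l + Real.log l - Real.log (-y) - y)
        (-(y₀⁻¹) - 1) y₀ := by
      have hlog : HasDerivAt (fun y : ℝ => Real.log (-y)) (y₀⁻¹) y₀ := by
        have h1 : HasDerivAt (fun y : ℝ => -y) (-1) y₀ := (hasDerivAt_id y₀).neg
        have h2 := (Real.hasDerivAt_log (neg_ne_zero.2 hy₀0)).comp y₀ h1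
        refine h2.congr_deriv ?_
        rw [inv_neg]; ring
      have h3 := ((hasDerivAt_const y₀ (1 - l + Real.log l)).sub hlog).sub (hasDerivAt_id y₀)
      refine h3.congr_deriv ?_
      ring
    have hne : -(y₀⁻¹) - 1 ≠ 0 := by
      have h1 : y₀ < 0 := hy₀mem.2
      have h2 : (-1 : ℝ) < y₀ := hy₀mem.1
      have h3 : y₀ * y₀⁻¹ = 1 := mul_inv_cancel₀ hy₀0
      intro h
      have : y₀⁻¹ = -1 := by linarith
      rw [this] at h3
      nlinarith
    have hfg : ∀ᶠ z in 𝓝 z₀,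
        (fun y : ℝ => 1 - l + Real.log l - Real.log (-y) - y)
          (W (-(l * Real.exp (1 - l - z)))) = z := by
      filter_upwards [eventually_gt_nhds hz₀c] with z hz
      obtain ⟨hm, hE'⟩ := hWIoo _ (hxIoo z hz)
      set w := W (-(l * Real.exp (1 - l - z))) with hwdef
      have hw0 : w < 0 := hm.2
      have h1 : (-w) * Real.exp w = l * Real.exp (1 - l - z) := by linear_combination -hE'
      have h2 := congrArg Real.log h1
      rw [Real.log_mul (by linarith) (Real.exp_ne_zero _), Real.log_exp,
        Real.log_mul (ne_of_gt hl0) (Real.exp_ne_zero _), Real.log_exp] at h2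
      change 1 - l + Real.log l - Real.log (-w) - w = z
      rw [show Real.log (-w) = Real.log l + (1 - l - z) - w by linarith]
      ring
    have hwderiv : HasDerivAt (fun z => W (-(l * Real.exp (1 - l - z))))
        ((-(y₀⁻¹) - 1)⁻¹) z₀ :=
      hfinv.of_local_left_inverse hwcont hne hfg
    have hlog2 : HasDerivAt (fun z => Real.log (-(W (-(l * Real.exp (1 - l - z))))))
        ((-y₀)⁻¹ * -((-(y₀⁻¹) - 1)⁻¹)) z₀ :=
      by have := (Real.hasDerivAt_log (neg_ne_zero.2 hy₀0)).comp z₀ hwderiv.neg; exact this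
    have hinv2 : HasDerivAt (fun z => (W (-(l * Real.exp (1 - l - z))))⁻¹)
        (-((-(y₀⁻¹) - 1)⁻¹) / y₀ ^ 2) z₀ := hwderiv.inv hy₀0
    have hfinal := (hlog2.sub hinv2).const_mul l
    have hA : -y₀ / (1 + y₀) = (-(y₀⁻¹) - 1)⁻¹ :=
      eq_inv_of_mul_eq_one_right (by field_simp [hy₀0, hy₀1]; ring)
    refine hfinal.congr_deriv ?_
    rw [← hA]
    field_simp
    ring
  have hcont : ContinuousOn (fun z => -l / W (-(l * Real.exp (1 - l - z)))) (Set.uIcc u 1) := by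
    rw [Set.uIcc_of_le hu1.le]
    intro z hz
    have hzc : c < z := lt_of_lt_of_le hcu hz.1
    apply ContinuousAt.continuousWithinAt
    exact ContinuousAt.div continuousAt_const
      (ContinuousAt.comp (g := W) (f := fun z : ℝ => -(l * Real.exp (1 - l - z)))
        (hWcont _ (hxIoo z hzc)) (by fun_prop))
      (ne_of_lt (hWIoo _ (hxIoo z hzc)).1.2)
  rw [intervalIntegral.integral_eq_sub_of_hasDerivAt
    (fun z hz => key z (by rwa [Set.uIcc_of_le hu1.le] at hz))
    hcont.intervalIntegrable]
  have hW1 : W (-(l * Real.exp (1 - l - 1))) = -l := by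
    rw [show -(l * Real.exp (1 - l - 1)) = (-l) * Real.exp (-l) by
      rw [show (1 : ℝ) - l - 1 = -l by ring]; ring]
    exact hW' (-l) (by linarith)
  have hWu : W (-(l * Real.exp (1 - l - u))) = -u := by
    rw [show -(l * Real.exp (1 - l - u)) = (-u) * Real.exp (-u) by
      rw [hu_def, show (1 : ℝ) - l - l * Real.exp (1 - l) = (1 - l) + -(l * Real.exp (1 - l)) by ring,
        Real.exp_add]; ring]
    exact hW' (-u) (by linarith)
  rw [hW1, hWu, neg_neg, neg_neg, hlogu]
  have hui : l * u⁻¹ = Real.exp (l - 1) := by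
    rw [hu_def, mul_inv, ← mul_assoc, mul_inv_cancel₀ (ne_of_gt hl0), one_mul, ← Real.exp_neg]
    ring_nf
  have h1 : l * l⁻¹ = 1 := mul_inv_cancel₀ (ne_of_gt hl0)
  have hexpand : l * (Real.log l - (-l)⁻¹) - l * (Real.log l + (1 - l) - (-u)⁻¹) =
      l * l⁻¹ - l * (1 - l) - l * u⁻¹ := by
    rw [inv_neg, inv_neg]; ring
  rw [hexpand, h1, hui]
  ring
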